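/- Let Q_θ, for θ ∈ Θ, be probability measures on ℝ with cumulative distribution functions F_θ, and let Q_{θ+}^{-1}(u) = sup{z : F_θ(z−) ≤ u} denote the right-continuous quantile function. Let L be a real-valued statistic, δ, α ∈ (0,1). Then [L(X), ∞) is a frequentist (δ,α)-tolerance interval, i.e. P_θ(x : Q_θ([L(x), ∞)) ≥ 1−δ) ≥ 1−α for all θ, if and only if L(X) ≤ Q_{θ+}^{-1}(δ) with P_θ-probability at least 1−α for all θ, i.e. [L(X), ∞) is a one-sided (1−α)-confidence interval for Q_{θ+}^{-1}(δ). -/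

import Mathlib

open MeasureTheory Set Filter Topology

private lemma F_add_G (Q : Measure ℝ) [IsProbabilityMeasure Q] (t : ℝ) :
    (Q (Set.Iio t)).toReal + (Q (Set.Ici t)).toReal = 1 := by
  rw [← ENNReal.toReal_add (measure_ne_top _ _) (measure_ne_top _ _)]
  rw [← measure_union (by simp [Set.disjoint_left]) measurableSet_Ici]
  rw [Set.Iio_union_Ici, measure_univ, ENNReal.toReal_one]

private lemma key (Q : Measure ℝ) [IsProbabilityMeasure Q] (δ : ℝ)
    (hδ : δ ∈ Set.Ioo (0 : ℝ) 1) (t : ℝ) :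
    1 - δ ≤ (Q (Set.Ici t)).toReal ↔ t ≤ sSup {z : ℝ | (Q (Set.Iio z)).toReal ≤ δ} := by
  obtain ⟨hδ0, hδ1⟩ := hδ
  set S : Set ℝ := {z : ℝ | (Q (Set.Iio z)).toReal ≤ δ} with hS
  -- S is nonempty
  have hGlim : Tendsto (fun z => (Q (Set.Ici z)).toReal) atBot (𝓝 1) := by
    have h := tendsto_measure_Ici_atBot Q
    rw [measure_univ] at h
    have := (ENNReal.tendsto_toReal (by simp)).comp h
    simpa [Function.comp_def] using this
  have hne : S.Nonempty := by
    obtain ⟨z, hz⟩ := (hGlim.eventually (lt_mem_nhds (show 1 - δ < 1 by linarith))).exists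
    refine ⟨z, ?_⟩
    have := F_add_G Q z
    simp only [hS, Set.mem_setOf_eq]
    linarith
  -- S is bounded above
  have hFlim : Tendsto (fun z => (Q (Set.Iic z)).toReal) atTop (𝓝 1) := by
    have h := tendsto_measure_Iic_atTop Q
    rw [measure_univ] at h
    have := (ENNReal.tendsto_toReal (by simp)).comp h
    simpa [Function.comp_def] using this
  obtain ⟨z₀, hz₀⟩ := (hFlim.eventually (lt_mem_nhds (show δ < 1 by linarith))).exists
  have hbdd : BddAbove S := by
    refine ⟨z₀ + 1, fun z hz => ?_⟩
    by_contra h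
    push_neg at h
    have hsub : Set.Iic z₀ ⊆ Set.Iio z := fun y hy => lt_of_le_of_lt (Set.mem_Iic.mp hy) (by linarith)
    have : (Q (Set.Iic z₀)).toReal ≤ (Q (Set.Iio z)).toReal :=
      ENNReal.toReal_mono (measure_ne_top _ _) (measure_mono hsub)
    have hz' : (Q (Set.Iio z)).toReal ≤ δ := hz
    linarith
  have hFG := F_add_G Q t
  constructor
  · intro h
    have ht : t ∈ S := by
      simp only [hS, Set.mem_setOf_eq]; linarith
    exact le_csSup hbdd ht
  · intro h
    -- show (Q (Iio t)).toReal ≤ δ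
    have hmain : Q (Set.Iio t) ≤ ENNReal.ofReal δ := by
      have hun : Set.Iio t = ⋃ n : ℕ, Set.Iic (t - (n + 1 : ℝ)⁻¹) := by
        ext x
        simp only [Set.mem_Iio, Set.mem_iUnion, Set.mem_Iic]
        constructor
        · intro hx
          obtain ⟨n, hn⟩ := exists_nat_one_div_lt (show (0:ℝ) < t - x by linarith)
          exact ⟨n, by rw [one_div] at hn; linarith⟩
        · rintro ⟨n, hn⟩
          have : (0:ℝ) < ((n:ℝ) + 1)⁻¹ := by positivity
          linarith
      rw [hun, Directed.measure_iUnion]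
      · refine iSup_le fun n => ?_
        have hlt : t - ((n:ℝ) + 1)⁻¹ < sSup S := by
          have : (0:ℝ) < ((n:ℝ) + 1)⁻¹ := by positivity
          linarith
        obtain ⟨w, hwS, hw⟩ := exists_lt_of_lt_csSup hne hlt
        have hsub : Set.Iic (t - ((n:ℝ) + 1)⁻¹) ⊆ Set.Iio w := fun y hy =>
          lt_of_le_of_lt hy hw
        refine le_trans (measure_mono hsub) ?_
        have hwS' : (Q (Set.Iio w)).toReal ≤ δ := hwS
        exact (ENNReal.le_ofReal_iff_toReal_le (measure_ne_top _ _) hδ0.le).mpr hwS'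
      · refine Monotone.directed_le fun a b hab => Set.Iic_subset_Iic.mpr ?_
        have hab' : (a:ℝ) ≤ b := by exact_mod_cast hab
        gcongr
    have : (Q (Set.Iio t)).toReal ≤ δ := ENNReal.toReal_le_of_le_ofReal hδ0.le hmain
    linarith

/-- `[L(X), ∞)` is a frequentist `(δ,α)`-tolerance interval if and only if
it is a one-sided `(1−α)`-confidence interval for the right-continuous quantile
`Q_{θ+}⁻¹(δ) = sup {z : F_θ(z−) ≤ δ}`, where `F_θ(z−) = Q_θ((−∞, z))`. -/
theorem lower_tolerance_iff_confidence_for_quantile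
    {Θ 𝓧 : Type*} [MeasurableSpace 𝓧]
    (P : Θ → Measure 𝓧) (Q : Θ → Measure ℝ) [∀ θ, IsProbabilityMeasure (Q θ)]
    (L : 𝓧 → ℝ) (δ α : ℝ) (hδ : δ ∈ Set.Ioo (0 : ℝ) 1) (hα : α ∈ Set.Ioo (0 : ℝ) 1) :
    (∀ θ, ENNReal.ofReal (1 - α) ≤ P θ {x | 1 - δ ≤ (Q θ (Set.Ici (L x))).toReal}) ↔
    (∀ θ, ENNReal.ofReal (1 - α) ≤
      P θ {x | L x ≤ sSup {z : ℝ | (Q θ (Set.Iio z)).toReal ≤ δ}}) := by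
  have hset : ∀ θ, {x | 1 - δ ≤ (Q θ (Set.Ici (L x))).toReal} =
      {x | L x ≤ sSup {z : ℝ | (Q θ (Set.Iio z)).toReal ≤ δ}} := by
    intro θ
    ext x
    exact key (Q θ) δ hδ (L x)
  exact forall_congr' fun θ => by rw [hset θ]
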